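/- Given the GUE relations H_n = 2a r_{n,a} + 2b r_{n,b} − 2 r_{n,a}^2/R_{n,a} − 2 r_{n,b}^2/R_{n,b} − 2β_n(R_{n,a} + R_{n,b}), ∂_a H_n = 2 r_{n,a}, ∂_b H_n = 2 r_{n,b}, 4β_n = 2n + ∂_a H_n + ∂_b H_n, and the quadratic relations (∂_a² H_n + ∂_a∂_b H_n) = (∂_a H_n)²/R_{n,a} − (2n + ∂_a H_n + ∂_b H_n) R_{n,a} and (∂_b² H_n + ∂_a∂_b H_n) = (∂_b H_n)²/R_{n,b} − (2n + ∂_a H_n + ∂_b H_n) R_{n,b}, with R_{n,a} > 0, R_{n,b} < 0, and 2n + ∂_a H_n + ∂_b H_n > 0, it follows that 2b ∂_b H_n + 2a ∂_a H_n − 2H_n = √((∂_a²H_n + ∂_a∂_bH_n)² + 4(∂_a H_n)²(2n + ∂_a H_n + ∂_b H_n)) − √((∂_b²H_n + ∂_a∂_bH_n)² + 4(∂_b H_n)²(2n + ∂_a H_n + ∂_b H_n)). -/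

import Mathlib

/-- The square-root form of the GUE partial differential equation. -/
theorem gue_sqrt_identity
    (n : ℕ) (a b H Ha Hb Haa Hbb Hab rna rnb Rna Rnb β : ℝ)
    (hRa : 0 < Rna) (hRb : Rnb < 0)
    (hH : H = 2 * a * rna + 2 * b * rnb - 2 * rna ^ 2 / Rna -
      2 * rnb ^ 2 / Rnb - 2 * β * (Rna + Rnb))
    (hHa : Ha = 2 * rna) (hHb : Hb = 2 * rnb)
    (hβ : 4 * β = 2 * n + Ha + Hb)
    (hpos : 0 < 2 * n + Ha + Hb)
    (hq1 : Haa + Hab = Ha ^ 2 / Rna - (2 * n + Ha + Hb) * Rna)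
    (hq2 : Hbb + Hab = Hb ^ 2 / Rnb - (2 * n + Ha + Hb) * Rnb) :
    2 * b * Hb + 2 * a * Ha - 2 * H =
      Real.sqrt ((Haa + Hab) ^ 2 + 4 * Ha ^ 2 * (2 * n + Ha + Hb)) -
        Real.sqrt ((Hbb + Hab) ^ 2 + 4 * Hb ^ 2 * (2 * n + Ha + Hb)) := by
  have hRa0 : Rna ≠ 0 := ne_of_gt hRa
  have hRb0 : Rnb ≠ 0 := ne_of_lt hRb
  have key1 : (Haa + Hab) ^ 2 + 4 * Ha ^ 2 * (2 * n + Ha + Hb)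
      = (Ha ^ 2 / Rna + (2 * n + Ha + Hb) * Rna) ^ 2 := by
    rw [hq1]; field_simp; ring
  have key2 : (Hbb + Hab) ^ 2 + 4 * Hb ^ 2 * (2 * n + Ha + Hb)
      = (-(Hb ^ 2 / Rnb + (2 * n + Ha + Hb) * Rnb)) ^ 2 := by
    rw [hq2]; field_simp; ring
  have h1 : Real.sqrt ((Haa + Hab) ^ 2 + 4 * Ha ^ 2 * (2 * n + Ha + Hb))
      = Ha ^ 2 / Rna + (2 * n + Ha + Hb) * Rna := by
    rw [key1, Real.sqrt_sq (by positivity)]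
  have h2 : Real.sqrt ((Hbb + Hab) ^ 2 + 4 * Hb ^ 2 * (2 * n + Ha + Hb))
      = -(Hb ^ 2 / Rnb + (2 * n + Ha + Hb) * Rnb) := by
    rw [key2, Real.sqrt_sq]
    have h1 : Hb ^ 2 / Rnb ≤ 0 := div_nonpos_of_nonneg_of_nonpos (by positivity) hRb.le
    nlinarith [mul_pos hpos (neg_pos.mpr hRb)]
  rw [h1, h2]
  subst hH hHa hHb
  field_simp
  linear_combination (1/2 * (Rna * Rnb * (Rna + Rnb))) * hβ
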